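/- Let (X, d) be a metric space, let ≈ be an equivalence relation on X (its classes are called leaves, and [x] denotes the leaf of x), and let a group D act on X by maps preserving ≈ (if x ≈ y then g·x ≈ g·y for all g ∈ D). Let c > 0 and assume the action is c-leafwise expansive: for all x, y ∈ X with ¬(x ≈ y) there exists g ∈ D such that d_S([g·x], [g·y]) > c, where d_S(A, B) = inf{d(a, b) : a ∈ A, b ∈ B}. Let h : X → X be a map such that (i) d(h(x), x) < c for all x ∈ X, and (ii) h commutes with the action modulo leaves: h(g·x) ≈ g·h(x) for all g ∈ D and x ∈ X. Then h(x) ≈ x for every x ∈ X; that is, h maps every leaf into itself. -/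
import Mathlib


/-- The set distance `d_S(A, B) = inf {d(a,b) : a ∈ A, b ∈ B}` between two subsets
of a metric space. -/
noncomputable def setDist {X : Type*} [MetricSpace X] (A B : Set X) : ℝ :=
  sInf (Set.image2 dist A B)

/-- Lemma 5.2: if a group `D` acts on a metric space `X` preserving an equivalence
relation `E` (whose classes are the leaves), the action is `c`-leafwise expansive,
and `h : X → X` moves every point by less than `c` and commutes with the action
modulo leaves, then `h` maps every leaf into itself. -/
theorem stmt_2 {X : Type*} [MetricSpace X] {D : Type*} [Group D] [MulAction D X]
    (E : X → X → Prop) (hE : Equivalence E)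
    (hact : ∀ (g : D) (x y : X), E x y → E (g • x) (g • y))
    (c : ℝ) (hc : 0 < c)
    (hexp : ∀ x y : X, ¬ E x y →
      ∃ g : D, c < setDist {a | E (g • x) a} {b | E (g • y) b})
    (h : X → X)
    (hsmall : ∀ x : X, dist (h x) x < c)
    (hcomm : ∀ (g : D) (x : X), E (h (g • x)) (g • h x)) :
    ∀ x : X, E (h x) x := by
  intro x
  by_contra hne
  obtain ⟨g, hg⟩ := hexp (h x) x hne
  have h1 : h (g • x) ∈ {a | E (g • h x) a} := hE.symm (hcomm g x)
  have h2 : g • x ∈ {b | E (g • x) b} := hE.refl _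
  have hle : setDist {a | E (g • h x) a} {b | E (g • x) b} ≤ dist (h (g • x)) (g • x) := by
    apply csInf_le
    · exact ⟨0, fun r ⟨a, _, b, _, hr⟩ => hr ▸ dist_nonneg⟩
    · exact ⟨_, h1, _, h2, rfl⟩
  exact absurd (lt_of_lt_of_le hg hle) (not_lt.2 (hsmall _).le)
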